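/- For any graph G without isolated vertices, γ_dR^m(G) ≤ 3·γ_m(G) − 2. -/

import Mathlib

open Finset

/-- A set `S` dominates `G`: every vertex outside `S` has a neighbor in `S`. -/
def IsDomSet {V : Type*} (G : SimpleGraph V) (S : Set V) : Prop :=
  ∀ v ∉ S, ∃ u ∈ S, G.Adj v u

/-- A maximal dominating set: dominating, and its complement is not dominating. -/
def IsMaxDomSet {V : Type*} (G : SimpleGraph V) (S : Set V) : Prop :=
  IsDomSet G S ∧ ¬ IsDomSet G Sᶜ

/-- Double Roman dominating function. -/
def IsDRDF {V : Type*} (G : SimpleGraph V) (f : V → ℕ) : Prop :=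
  (∀ v, f v ≤ 3) ∧
  (∀ v, f v = 0 → (∃ u, G.Adj v u ∧ f u = 3) ∨
      ∃ u w, u ≠ w ∧ G.Adj v u ∧ G.Adj v w ∧ f u = 2 ∧ f w = 2) ∧
  (∀ v, f v = 1 → ∃ u, G.Adj v u ∧ (f u = 2 ∨ f u = 3))

/-- Maximal double Roman dominating function: a DRDF whose 0-set is not dominating. -/
def IsMDRDF {V : Type*} (G : SimpleGraph V) (f : V → ℕ) : Prop :=
  IsDRDF G f ∧ ¬ IsDomSet G {v | f v = 0}

/-- Roman dominating function. -/
def IsRDF {V : Type*} (G : SimpleGraph V) (f : V → ℕ) : Prop :=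
  (∀ v, f v ≤ 2) ∧ ∀ v, f v = 0 → ∃ u, G.Adj v u ∧ f u = 2

/-- Maximal Roman dominating function. -/
def IsMRDF {V : Type*} (G : SimpleGraph V) (f : V → ℕ) : Prop :=
  IsRDF G f ∧ ¬ IsDomSet G {v | f v = 0}

/-- Double Roman domination number. -/
noncomputable def drdNum {V : Type*} [Fintype V] (G : SimpleGraph V) : ℕ :=
  sInf {w | ∃ f, IsDRDF G f ∧ ∑ v, f v = w}

/-- Maximal double Roman domination number. -/
noncomputable def mdrdNum {V : Type*} [Fintype V] (G : SimpleGraph V) : ℕ :=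
  sInf {w | ∃ f, IsMDRDF G f ∧ ∑ v, f v = w}

/-- Maximal Roman domination number. -/
noncomputable def mRomanNum {V : Type*} [Fintype V] (G : SimpleGraph V) : ℕ :=
  sInf {w | ∃ f, IsMRDF G f ∧ ∑ v, f v = w}

/-- Maximal domination number. -/
noncomputable def maxDomNum {V : Type*} [Fintype V] (G : SimpleGraph V) : ℕ :=
  sInf {k | ∃ S : Set V, IsMaxDomSet G S ∧ S.ncard = k}

theorem stmt9 {V : Type*} [Fintype V] (G : SimpleGraph V)
    (h : ∀ v, ∃ u, G.Adj v u) :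
    mdrdNum G ≤ 3 * maxDomNum G - 2 := by
  classical
  by_cases hV : Nonempty V
  · obtain ⟨v₀⟩ := hV
    -- the defining set for maxDomNum is nonempty (S = univ works)
    have hne : {k | ∃ S : Set V, IsMaxDomSet G S ∧ S.ncard = k}.Nonempty := by
      refine ⟨(Set.univ : Set V).ncard, Set.univ, ⟨?_, ?_⟩, rfl⟩
      · intro v hv; exact absurd (Set.mem_univ v) hv
      · intro hd
        obtain ⟨u, hu, -⟩ := hd v₀ (by simp)
        simp at hu
    obtain ⟨S, hS, hcard⟩ := Nat.sInf_mem hne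
    have hdom := hS.1
    have hnd := hS.2
    -- extract witness v ∈ S with no neighbor in Sᶜ
    rw [IsDomSet] at hnd
    push_neg at hnd
    obtain ⟨v, hvS, hv⟩ := hnd
    rw [Set.notMem_compl_iff] at hvS
    have hvnb : ∀ u, G.Adj v u → u ∈ S := by
      intro u hu
      by_contra hus
      exact hv u hus hu
    set f : V → ℕ := fun x => if x = v then 1 else if x ∈ S then 3 else 0 with hf
    have hfv : f v = 1 := by simp [hf]
    have hf3 : ∀ x ∈ S, x ≠ v → f x = 3 := by
      intro x hx hxv; simp [hf, hxv, hx]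
    have hf0 : ∀ x, f x = 0 → x ∉ S ∧ x ≠ v := by
      intro x hx
      by_cases h1 : x = v
      · simp [hf, h1] at hx
      · by_cases h2 : x ∈ S
        · simp [hf, h1, h2] at hx
        · exact ⟨h2, h1⟩
    have hMDRDF : IsMDRDF G f := by
      refine ⟨⟨?_, ?_, ?_⟩, ?_⟩
      · intro x
        by_cases h1 : x = v <;> by_cases h2 : x ∈ S <;> simp [hf, h1, h2]
      · intro x hx
        obtain ⟨hxS, hxv⟩ := hf0 x hx
        obtain ⟨u, huS, hadj⟩ := hdom x hxS
        have huv : u ≠ v := by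
          rintro rfl
          exact hxS (hvnb x hadj.symm)
        exact Or.inl ⟨u, hadj, hf3 u huS huv⟩
      · intro x hx
        have hxv : x = v := by
          by_contra h1
          by_cases h2 : x ∈ S <;> simp [hf, h1, h2] at hx
        rw [hxv]
        obtain ⟨u, hadj⟩ := h v
        have huS := hvnb u hadj
        have huv : u ≠ v := fun e => G.loopless.irrefl v (e ▸ hadj)
        exact ⟨u, hadj, Or.inr (hf3 u huS huv)⟩
      · intro hd
        obtain ⟨u, hu0, hadj⟩ := hd v (by simp [hfv])
        have : f u = 0 := hu0
        exact (hf0 u this).1 (hvnb u hadj)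
    -- weight computation
    have hsum : ∑ x, f x + 2 = 3 * S.ncard := by
      have hpt : ∀ x, (if x ∈ S then 3 else 0) = f x + (if x = v then 2 else 0) := by
        intro x
        by_cases h1 : x = v
        · subst h1; simp [hf, hvS]
        · by_cases h2 : x ∈ S <;> simp [hf, h1, h2]
      have h1 : ∑ x, (if x ∈ S then (3:ℕ) else 0) = ∑ x, f x + 2 := by
        rw [Finset.sum_congr rfl (fun x _ => hpt x), Finset.sum_add_distrib]
        simp
      have h2 : ∑ x, (if x ∈ S then (3:ℕ) else 0) = 3 * S.ncard := by
        have : ∑ x, (if x ∈ S then (3:ℕ) else 0)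
            = ∑ x, (if x ∈ S.toFinset then (3:ℕ) else 0) :=
          Finset.sum_congr rfl (fun x _ => by simp)
        rw [this, Finset.sum_ite_mem, Finset.univ_inter, Finset.sum_const,
          smul_eq_mul, Set.ncard_eq_toFinset_card', mul_comm]
      omega
    have hk1 : 1 ≤ S.ncard := by
      have : S.Nonempty := ⟨v, hvS⟩
      have := (Set.ncard_pos (Set.toFinite S)).mpr this
      omega
    have hcard2 : S.ncard = maxDomNum G := by rw [maxDomNum]; exact hcard
    have hmem : (3 * maxDomNum G - 2) ∈ {w | ∃ f, IsMDRDF G f ∧ ∑ v, f v = w} := by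
      refine ⟨f, hMDRDF, ?_⟩
      rw [← hcard2]
      omega
    exact Nat.sInf_le hmem
  · have : {w | ∃ f, IsMDRDF G f ∧ ∑ v, f v = w} = ∅ := by
      ext w
      simp only [Set.mem_setOf_eq, Set.mem_empty_iff_false, iff_false]
      rintro ⟨f, ⟨-, hnd⟩, -⟩
      exact hnd (fun v _ => absurd ⟨v⟩ hV)
    rw [mdrdNum, this, Nat.sInf_empty]
    exact Nat.zero_le _
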